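/- Let f : ℂ → ℂ be analytic at z with f'(z) ≠ 0 and f''(z) ≠ 0, set s = S f (the Schwarzian derivative), and let g = D f, i.e. g(w) = f(w) − 2·f'(w)²/f''(w) near z. If g''(z) ≠ 0 and s(z)² − (f''(z)/(2·f'(z)))·s'(z) ≠ 0, then g(z) − 2·g'(z)²/g''(z) = f(z) + f'(z)·s'(z)/(s(z)² − (f''(z)/(2·f'(z)))·s'(z)). -/

import Mathlib

/-- The Schwarzian derivative `S f (z) = f'''(z)/f'(z) − (3/2)·(f''(z)/f'(z))²`. -/
noncomputable def schwarzian (f : ℂ → ℂ) (z : ℂ) : ℂ :=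
  deriv (deriv (deriv f)) z / deriv f z - (3 / 2) * (deriv (deriv f) z / deriv f z) ^ 2

lemma analyticAt_deriv {f : ℂ → ℂ} {z : ℂ} (h : AnalyticAt ℂ f z) :
    AnalyticAt ℂ (deriv f) z := by
  obtain ⟨s, hs, hOn⟩ := h.exists_mem_nhds_analyticOnNhd
  exact hOn.deriv z (mem_of_mem_nhds hs)

/-- First derivative of `D f` at a point where `f` is analytic and `f'' ≠ 0`. -/
lemma hasDerivAt_Df (f : ℂ → ℂ) (w : ℂ) (hfw : AnalyticAt ℂ f w)
    (hb : deriv (deriv f) w ≠ 0) :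
    HasDerivAt (fun u => f u - 2 * (deriv f u) ^ 2 / deriv (deriv f) u)
      (-3 * deriv f w + 2 * (deriv f w) ^ 2 * deriv (deriv (deriv f)) w
        / (deriv (deriv f) w) ^ 2) w := by
  have h1 : HasDerivAt f (deriv f w) w := hfw.differentiableAt.hasDerivAt
  have h2 : HasDerivAt (deriv f) (deriv (deriv f) w) w :=
    (analyticAt_deriv hfw).differentiableAt.hasDerivAt
  have h3 : HasDerivAt (deriv (deriv f)) (deriv (deriv (deriv f)) w) w :=
    (analyticAt_deriv (analyticAt_deriv hfw)).differentiableAt.hasDerivAt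
  have H := h1.sub (((h2.pow 2).const_mul (2 : ℂ)).div h3 hb)
  convert H using 1
  all_goals try rfl
  simp only [Pi.pow_apply]
  field_simp
  try ring_nf
  try field_simp
  try ring

lemma div_aux_L (N B P : ℂ) (hB : B ≠ 0) (hP : P ≠ 0) :
    2 * (N / B ^ 2) ^ 2 / (P / B ^ 4) = 2 * N ^ 2 / P := by
  field_simp

lemma div_aux_R (A S Q : ℂ) (hA : A ≠ 0) (hQ : Q ≠ 0) :
    A * (S / A ^ 3) / (Q / (4 * A ^ 4)) = 4 * A ^ 2 * S / Q := by
  field_simp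

set_option maxHeartbeats 2000000 in
/-- The paper's second-iterate formula `D ∘ D = Id + X/(𝓗 + φ_X)`, expressing `D(D f)`
as the deformation of `D` by an invariant rational expression in the Schwarzian `s = S f`
and its derivative, with pre-Schwarzian `φ = −f''/(2f')`. -/
theorem D_second_iterate
    (f g s : ℂ → ℂ) (z : ℂ)
    (hf : AnalyticAt ℂ f z)
    (hf' : deriv f z ≠ 0) (hf'' : deriv (deriv f) z ≠ 0)
    (hs : s = fun w => schwarzian f w)
    (hg : g = fun w => f w - 2 * (deriv f w) ^ 2 / deriv (deriv f) w)
    (hg'' : deriv (deriv g) z ≠ 0)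
    (hden : s z ^ 2 - (deriv (deriv f) z / (2 * deriv f z)) * deriv s z ≠ 0) :
    g z - 2 * (deriv g z) ^ 2 / deriv (deriv g) z
      = f z + deriv f z * deriv s z
          / (s z ^ 2 - (deriv (deriv f) z / (2 * deriv f z)) * deriv s z) := by
  subst hs hg
  -- pointwise derivative facts at z
  have hd2 : HasDerivAt (deriv f) (deriv (deriv f) z) z :=
    (analyticAt_deriv hf).differentiableAt.hasDerivAt
  have hd3 : HasDerivAt (deriv (deriv f)) (deriv (deriv (deriv f)) z) z :=
    (analyticAt_deriv (analyticAt_deriv hf)).differentiableAt.hasDerivAt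
  have hd4 : HasDerivAt (deriv (deriv (deriv f))) (deriv (deriv (deriv (deriv f))) z) z :=
    (analyticAt_deriv (analyticAt_deriv (analyticAt_deriv hf))).differentiableAt.hasDerivAt
  -- first derivative of g at z
  have e1 : deriv (fun u => f u - 2 * (deriv f u) ^ 2 / deriv (deriv f) u) z
      = -3 * deriv f z + 2 * (deriv f z) ^ 2 * deriv (deriv (deriv f)) z
        / (deriv (deriv f) z) ^ 2 := (hasDerivAt_Df f z hf hf'').deriv
  -- eventual formula for deriv g near z
  have hev : ∀ᶠ w in nhds z, AnalyticAt ℂ f w ∧ deriv (deriv f) w ≠ 0 :=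
    hf.eventually_analyticAt.and ((analyticAt_deriv (analyticAt_deriv hf)).continuousAt.eventually_ne hf'')
  have hDg : deriv (fun u => f u - 2 * (deriv f u) ^ 2 / deriv (deriv f) u)
      =ᶠ[nhds z] fun w => -3 * deriv f w + 2 * (deriv f w) ^ 2 * deriv (deriv (deriv f)) w
        / (deriv (deriv f) w) ^ 2 :=
    hev.mono fun w hw => (hasDerivAt_Df f w hw.1 hw.2).deriv
  -- second derivative of g at z
  have HG1 : HasDerivAt (fun w => -3 * deriv f w + 2 * (deriv f w) ^ 2
        * deriv (deriv (deriv f)) w / (deriv (deriv f) w) ^ 2)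
      (-3 * deriv (deriv f) z
        + ((((2:ℂ) * ((2:ℕ) * deriv f z ^ (2-1) * deriv (deriv f) z))
              * deriv (deriv (deriv f)) z
            + 2 * (deriv f z) ^ 2 * deriv (deriv (deriv (deriv f))) z)
              * (deriv (deriv f) z) ^ 2
          - 2 * (deriv f z) ^ 2 * deriv (deriv (deriv f)) z
              * ((2:ℕ) * deriv (deriv f) z ^ (2-1) * deriv (deriv (deriv f)) z))
          / ((deriv (deriv f) z) ^ 2) ^ 2) z :=
    (hd2.const_mul (-3 : ℂ)).add
      ((((hd2.pow 2).const_mul (2 : ℂ)).mul hd4).div (hd3.pow 2) (pow_ne_zero 2 hf''))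
  have e2 := (Filter.EventuallyEq.deriv_eq hDg).trans HG1.deriv
  -- the Schwarzian and its derivative at z
  have HS : HasDerivAt (fun w => schwarzian f w)
      ((deriv (deriv (deriv (deriv f))) z * deriv f z
          - deriv (deriv (deriv f)) z * deriv (deriv f) z) / (deriv f z) ^ 2
        - (3 / 2 : ℂ) * ((2:ℕ) * (deriv (deriv f) z / deriv f z) ^ (2-1)
            * ((deriv (deriv (deriv f)) z * deriv f z
                - deriv (deriv f) z * deriv (deriv f) z) / (deriv f z) ^ 2))) z := by
    exact (hd4.div hd2 hf').sub (((hd3.div hd2 hf').pow 2).const_mul (3 / 2 : ℂ))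
  have e3 := HS.deriv
  have e0 : (fun w => schwarzian f w) z = deriv (deriv (deriv f)) z / deriv f z
      - (3 / 2) * (deriv (deriv f) z / deriv f z) ^ 2 := rfl
  rw [e0, e3] at hden ⊢
  rw [e2] at hg'' ⊢
  rw [e1]
  simp only [show (2:ℕ) - 1 = 1 from rfl, pow_one, Nat.cast_ofNat] at hg'' hden ⊢
  set A := deriv f z with hAdef
  set B := deriv (deriv f) z with hBdef
  set C := deriv (deriv (deriv f)) z with hCdef
  set Dv := deriv (deriv (deriv (deriv f))) z with hDdef
  have hA4 : (4 : ℂ) * A ^ 4 ≠ 0 :=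
    mul_ne_zero (by norm_num) (pow_ne_zero 4 hf')
  have hB4 : B ^ 4 ≠ 0 := pow_ne_zero 4 hf''
  have eS1 : (Dv * A - C * B) / A ^ 2
        - 3 / 2 * (2 * (B / A) * ((C * A - B * B) / A ^ 2))
      = (A * (Dv * A - C * B) - 3 * B * (C * A - B ^ 2)) / A ^ 3 := by
    field_simp
    try ring_nf
    try field_simp
    try ring
  rw [eS1] at hden ⊢
  have eden : (C / A - 3 / 2 * (B / A) ^ 2) ^ 2
        - B / (2 * A) * ((A * (Dv * A - C * B) - 3 * B * (C * A - B ^ 2)) / A ^ 3)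
      = ((2 * A * C - 3 * B ^ 2) ^ 2
          - 2 * B * (A * (Dv * A - C * B) - 3 * B * (C * A - B ^ 2))) / (4 * A ^ 4) := by
    field_simp
    try ring_nf
    try field_simp
    try ring
  rw [eden] at hden ⊢
  have hQ : (2 * A * C - 3 * B ^ 2) ^ 2
      - 2 * B * (A * (Dv * A - C * B) - 3 * B * (C * A - B ^ 2)) ≠ 0 := by
    intro h; exact hden (by rw [h, zero_div])
  have eE : -3 * B + ((2 * (2 * A * B) * C + 2 * A ^ 2 * Dv) * B ^ 2
        - 2 * A ^ 2 * C * (2 * B * C)) / (B ^ 2) ^ 2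
      = (-3 * B ^ 5 + 4 * A * B ^ 3 * C + 2 * A ^ 2 * B ^ 2 * Dv
          - 4 * A ^ 2 * B * C ^ 2) / B ^ 4 := by
    field_simp
    try ring_nf
    try field_simp
    try ring
  rw [eE] at hg'' ⊢
  have hP : -3 * B ^ 5 + 4 * A * B ^ 3 * C + 2 * A ^ 2 * B ^ 2 * Dv
      - 4 * A ^ 2 * B * C ^ 2 ≠ 0 := by
    intro h; exact hg'' (by rw [h, zero_div])
  have eG : -3 * A + 2 * A ^ 2 * C / B ^ 2
      = (-3 * A * B ^ 2 + 2 * A ^ 2 * C) / B ^ 2 := by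
    field_simp
    try ring
  rw [eG]
  rw [div_aux_L _ _ _ hf'' hP, div_aux_R _ _ _ hf' hQ]
  have hP1 : -3 * B ^ 4 + 4 * A * B ^ 2 * C + 2 * A ^ 2 * B * Dv
      - 4 * A ^ 2 * C ^ 2 ≠ 0 := fun h => hP (by linear_combination B * h)
  have hP2 : (-(B * A ^ 2 * C ^ 2 * 4) + B ^ 2 * A ^ 2 * Dv * 2
      + (B ^ 3 * A * C * 4 - B ^ 5 * 3)) ≠ 0 :=
    fun h => hP (by linear_combination h)
  have hinv : (-(B * A ^ 2 * C ^ 2 * 4) + B ^ 2 * A ^ 2 * Dv * 2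
        + (B ^ 3 * A * C * 4 - B ^ 5 * 3))
      * (-(B * A ^ 2 * C ^ 2 * 4) + B ^ 2 * A ^ 2 * Dv * 2
        + (B ^ 3 * A * C * 4 - B ^ 5 * 3))⁻¹ = 1 :=
    mul_inv_cancel₀ hP2
  field_simp [hP1]
  have hP3 : B * (B * (-(B ^ 2 * 3) + A * C * 4) + 2 * A ^ 2 * Dv) - A ^ 2 * C ^ 2 * 4 ≠ 0 :=
    fun h => hP1 (by linear_combination h)
  have hQ3 : (2 * A * C - B ^ 2 * 3) ^ 2 - 2 * B * (A * (A * Dv - B * C) - B * 3 * (A * C - B ^ 2))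
      = -(B * (B * (-(B ^ 2 * 3) + A * C * 4) + 2 * A ^ 2 * Dv) - A ^ 2 * C ^ 2 * 4) := by ring
  rw [hQ3]
  field_simp
  ring
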